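/- Let G be the Green function of -Δ + 1 on ℝ^N (N ≥ 2) with zero Dirichlet condition at infinity. Then for every 0 < η < 1 there exists C > 0 such that for all x ∈ ℝ^N, ∫_{ℝ^N} G(y - x) e^{-η|y|} dy ≤ C e^{-η|x|}. -/

import Mathlib

open Real MeasureTheory
open Set Metric Module Filter


lemma auxBall {N : ℕ} {a : ℝ} (ha : -(N:ℝ) < a) (ha0 : a ≤ 0) :
    IntegrableOn (fun z : EuclideanSpace ℝ (Fin N) => ‖z‖ ^ a) (Metric.ball 0 1) := by
  rcases eq_or_lt_of_le ha0 with rfl | haneg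
  · have : (fun z : EuclideanSpace ℝ (Fin N) => ‖z‖ ^ (0:ℝ)) = fun _ => (1:ℝ) := by
      funext z; simp
    rw [this]
    exact integrableOn_const measure_ball_lt_top.ne (by simp)
  have hmeas : Measurable fun z : EuclideanSpace ℝ (Fin N) => ‖z‖ ^ a :=
    measurable_norm.pow_const a
  refine ⟨hmeas.aestronglyMeasurable, ?_⟩
  rw [hasFiniteIntegral_iff_ofReal (ae_of_all _ fun z => rpow_nonneg (norm_nonneg _) _)]
  rw [lintegral_eq_lintegral_meas_le _ (ae_of_all _ fun z => rpow_nonneg (norm_nonneg _) _)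
    hmeas.aemeasurable]
  set μ : Measure (EuclideanSpace ℝ (Fin N)) := volume
  set f : ℝ → ENNReal := fun t => (μ.restrict (ball 0 1)) {z | t ≤ ‖z‖ ^ a} with hf
  calc
    ∫⁻ t in Ioi 0, f t ≤ ∫⁻ t in Ioc 0 1 ∪ Ioi 1, f t :=
      lintegral_mono_set Ioi_subset_Ioc_union_Ioi
    _ ≤ (∫⁻ t in Ioc 0 1, f t) + ∫⁻ t in Ioi 1, f t := lintegral_union_le _ _ _
    _ < ⊤ := ENNReal.add_lt_top.2 ⟨?_, ?_⟩
  · calc (∫⁻ t in Ioc 0 1, f t) ≤ ∫⁻ _ in Ioc (0:ℝ) 1, μ (ball 0 1) := by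
          refine setLIntegral_mono' measurableSet_Ioc fun t _ => ?_
          simpa [hf] using (measure_mono (subset_univ _)).trans
            (by rw [Measure.restrict_apply_univ])
        _ < ⊤ := by
          rw [setLIntegral_const]
          exact ENNReal.mul_lt_top measure_ball_lt_top (by simp)
  · have hbound : ∀ t ∈ Ioi (1:ℝ), f t ≤ ENNReal.ofReal (t ^ (a⁻¹ * N)) * μ (ball 0 1) := by
      intro t ht
      have ht0 : (0:ℝ) < t := lt_trans one_pos ht
      have hsub : {z : EuclideanSpace ℝ (Fin N) | t ≤ ‖z‖ ^ a} ⊆ closedBall 0 (t ^ a⁻¹) := by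
        intro z hz
        rcases eq_or_ne z 0 with rfl | hz0
        · exfalso
          rw [mem_setOf_eq, norm_zero, Real.zero_rpow haneg.ne] at hz
          exact absurd (ht0.trans_le hz) (lt_irrefl _)
        · rw [mem_closedBall_zero_iff]
          exact (Real.le_rpow_inv_iff_of_neg (norm_pos_iff.2 hz0) ht0 haneg).2 hz
      calc f t ≤ μ {z | t ≤ ‖z‖ ^ a} := Measure.restrict_le_self _ 
        _ ≤ μ (closedBall 0 (t ^ a⁻¹)) := measure_mono hsub
        _ = ENNReal.ofReal ((t ^ a⁻¹) ^ finrank ℝ (EuclideanSpace ℝ (Fin N))) * μ (ball 0 1) :=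
          μ.addHaar_closedBall 0 (rpow_nonneg ht0.le _)
        _ = ENNReal.ofReal (t ^ (a⁻¹ * N)) * μ (ball 0 1) := by
          rw [finrank_euclideanSpace_fin, ← Real.rpow_natCast (t ^ a⁻¹) N,
            ← Real.rpow_mul ht0.le]
    calc (∫⁻ t in Ioi 1, f t)
        ≤ ∫⁻ t in Ioi 1, ENNReal.ofReal (t ^ (a⁻¹ * N)) * μ (ball 0 1) :=
          setLIntegral_mono' measurableSet_Ioi hbound
      _ = (∫⁻ t in Ioi 1, ENNReal.ofReal (t ^ (a⁻¹ * N))) * μ (ball 0 1) :=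
          lintegral_mul_const' _ _ measure_ball_lt_top.ne
      _ < ⊤ := by
          refine ENNReal.mul_lt_top ?_ measure_ball_lt_top
          refine IntegrableOn.setLIntegral_lt_top ?_
          refine integrableOn_Ioi_rpow_of_lt ?_ one_pos
          rw [inv_mul_eq_div, div_lt_iff_of_neg haneg]
          linarith

lemma auxBdd (q : ℝ) {ε : ℝ} (hε : 0 < ε) :
    ∃ M : ℝ, 0 ≤ M ∧ ∀ u : ℝ, 1 ≤ u → u ^ q * Real.exp (-ε * u) ≤ M := by
  have htend := tendsto_rpow_mul_exp_neg_mul_atTop_nhds_zero q ε hε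
  have hev : ∀ᶠ u in atTop, u ^ q * Real.exp (-ε * u) < 1 :=
    htend.eventually_lt_const one_pos
  obtain ⟨T, hT⟩ := eventually_atTop.1 hev
  have hcont : ContinuousOn (fun u : ℝ => u ^ q * Real.exp (-ε * u)) (Icc 1 T) := by
    refine ContinuousOn.mul (fun u hu => ?_) ?_
    · exact (Real.continuousAt_rpow_const u q (Or.inl (by linarith [hu.1]))).continuousWithinAt
    · exact (Real.continuous_exp.comp (continuous_const.mul continuous_id)).continuousOn
  obtain ⟨M0, hM0⟩ := (isCompact_Icc).exists_bound_of_continuousOn hcont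
  refine ⟨max M0 1, le_max_of_le_right zero_le_one, fun u hu => ?_⟩
  rcases le_or_gt u T with h | h
  · exact le_trans (le_of_abs_le (hM0 u ⟨hu, h⟩)) (le_max_left _ _)
  · exact le_trans (hT u h.le).le (le_max_right _ _)

lemma auxInt {N : ℕ} (hN : 2 ≤ N) {C ε p : ℝ} (hC : 0 ≤ C) (hε : 0 < ε) :
    Integrable (fun z : EuclideanSpace ℝ (Fin N) =>
      C * Real.exp (-ε * ‖z‖) * ‖z‖ ^ ((2:ℝ) - N) * (1 + ‖z‖) ^ p) := by
  set a : ℝ := (2:ℝ) - N with ha_def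
  have hN2 : (2:ℝ) ≤ (N:ℝ) := by exact_mod_cast hN
  have ha : -(N:ℝ) < a := by rw [ha_def]; linarith
  have ha0 : a ≤ 0 := by rw [ha_def]; linarith
  have hm : Measurable (fun z : EuclideanSpace ℝ (Fin N) =>
      C * Real.exp (-ε * ‖z‖) * ‖z‖ ^ a * (1 + ‖z‖) ^ p) := by
    exact ((measurable_const.mul
      (Real.measurable_exp.comp (measurable_norm.const_mul (-ε)))).mul
      (measurable_norm.pow_const a)).mul
      ((measurable_const.add measurable_norm).pow_const p)
  have h1 : IntegrableOn (fun z : EuclideanSpace ℝ (Fin N) =>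
      C * Real.exp (-ε * ‖z‖) * ‖z‖ ^ a * (1 + ‖z‖) ^ p) (ball 0 1) := by
    refine Integrable.mono' ((auxBall ha ha0).const_mul (C * max ((2:ℝ) ^ p) 1))
      hm.aestronglyMeasurable ?_
    refine (ae_restrict_iff' measurableSet_ball).2 (ae_of_all _ fun z hz => ?_)
    have hz1 : ‖z‖ < 1 := mem_ball_zero_iff.1 hz
    have he : Real.exp (-ε * ‖z‖) ≤ 1 := by
      rw [Real.exp_le_one_iff]
      have := norm_nonneg z
      nlinarith
    have hb : (1 + ‖z‖) ^ p ≤ max ((2:ℝ) ^ p) 1 := by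
      rcases le_or_gt 0 p with hp | hp
      · exact le_max_of_le_left (Real.rpow_le_rpow (by positivity) (by linarith) hp)
      · exact le_max_of_le_right
          (Real.rpow_le_one_of_one_le_of_nonpos (by linarith [norm_nonneg z]) hp.le)
    rw [Real.norm_of_nonneg (by positivity)]
    calc C * Real.exp (-ε * ‖z‖) * ‖z‖ ^ a * (1 + ‖z‖) ^ p
        ≤ C * 1 * ‖z‖ ^ a * max ((2:ℝ) ^ p) 1 := by
          gcongr
      _ = C * max ((2:ℝ) ^ p) 1 * ‖z‖ ^ a := by ring
  obtain ⟨M, hM0, hM⟩ := auxBdd (p + (N + 1)) hε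
  have h2 : IntegrableOn (fun z : EuclideanSpace ℝ (Fin N) =>
      C * Real.exp (-ε * ‖z‖) * ‖z‖ ^ a * (1 + ‖z‖) ^ p) (ball 0 1)ᶜ := by
    have hint : Integrable (fun z : EuclideanSpace ℝ (Fin N) =>
        C * (Real.exp ε * M) * (1 + ‖z‖) ^ (-((N:ℝ) + 1))) := by
      refine Integrable.const_mul ?_ _
      refine integrable_one_add_norm ?_
      rw [finrank_euclideanSpace_fin]
      linarith
    refine Integrable.mono' hint.integrableOn hm.aestronglyMeasurable ?_
    refine (ae_restrict_iff' measurableSet_ball.compl).2 (ae_of_all _ fun z hz => ?_)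
    have hz1 : 1 ≤ ‖z‖ := not_lt.1 (fun h => hz (mem_ball_zero_iff.2 h))
    have hu1 : (1:ℝ) ≤ 1 + ‖z‖ := by linarith
    have hu0 : (0:ℝ) < 1 + ‖z‖ := by linarith
    have hra : ‖z‖ ^ a ≤ 1 := Real.rpow_le_one_of_one_le_of_nonpos hz1 ha0
    have key : Real.exp (-ε * ‖z‖) * (1 + ‖z‖) ^ p ≤
        Real.exp ε * M * (1 + ‖z‖) ^ (-((N:ℝ) + 1)) := by
      have he : Real.exp (-ε * ‖z‖) = Real.exp ε * Real.exp (-ε * (1 + ‖z‖)) := by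
        rw [← Real.exp_add]; ring_nf
      have hp' : (1 + ‖z‖) ^ p =
          (1 + ‖z‖) ^ (p + ((N:ℝ) + 1)) * (1 + ‖z‖) ^ (-((N:ℝ) + 1)) := by
        rw [← Real.rpow_add hu0]; ring_nf
      rw [he, hp']
      have := hM (1 + ‖z‖) hu1
      calc Real.exp ε * Real.exp (-ε * (1 + ‖z‖)) *
            ((1 + ‖z‖) ^ (p + ((N:ℝ) + 1)) * (1 + ‖z‖) ^ (-((N:ℝ) + 1)))
          = Real.exp ε * ((1 + ‖z‖) ^ (p + ((N:ℝ) + 1)) * Real.exp (-ε * (1 + ‖z‖)))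
            * (1 + ‖z‖) ^ (-((N:ℝ) + 1)) := by ring
        _ ≤ Real.exp ε * M * (1 + ‖z‖) ^ (-((N:ℝ) + 1)) := by
            gcongr
    rw [Real.norm_of_nonneg (by positivity)]
    calc C * Real.exp (-ε * ‖z‖) * ‖z‖ ^ a * (1 + ‖z‖) ^ p
        ≤ C * Real.exp (-ε * ‖z‖) * 1 * (1 + ‖z‖) ^ p := by gcongr
      _ = C * (Real.exp (-ε * ‖z‖) * (1 + ‖z‖) ^ p) := by ring
      _ ≤ C * (Real.exp ε * M * (1 + ‖z‖) ^ (-((N:ℝ) + 1))) := by gcongr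
      _ = C * (Real.exp ε * M) * (1 + ‖z‖) ^ (-((N:ℝ) + 1)) := by ring
  have := h1.union h2
  rw [union_compl_self] at this
  exact integrableOn_univ.1 this

/-- Weighted integrability estimate for the Green function of `-Δ + 1` on `ℝ^N`:
for every `0 < η < 1`, `∫ G(y-x) e^{-η|y|} dy ≤ C' e^{-η|x|}`. -/
theorem stmt5 (N : ℕ) (hN : 2 ≤ N) (G : ℝ → ℝ) (C : ℝ) (hC : 0 < C)
    (hGpos : ∀ r : ℝ, 0 < r → 0 < G r)
    (hGb : ∀ r : ℝ, 0 < r →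
      G r ≤ C * Real.exp (-r) * r ^ ((2 : ℝ) - N) * (1 + r) ^ (((N : ℝ) - 3) / 2))
    (η : ℝ) (hη : 0 < η) (hη1 : η < 1) :
    ∃ C' > 0, ∀ x : EuclideanSpace ℝ (Fin N),
      (∫ y : EuclideanSpace ℝ (Fin N), G ‖y - x‖ * Real.exp (-η * ‖y‖))
        ≤ C' * Real.exp (-η * ‖x‖) := by
  have hε : 0 < 1 - η := by linarith
  set p : ℝ := ((N:ℝ) - 3) / 2 with hp_def
  set h : EuclideanSpace ℝ (Fin N) → ℝ := fun z =>
    C * Real.exp (-(1 - η) * ‖z‖) * ‖z‖ ^ ((2:ℝ) - N) * (1 + ‖z‖) ^ p with hh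
  have hH : Integrable h := auxInt hN hC.le hε
  have hhnn : ∀ z, 0 ≤ h z := fun z => by
    rw [hh]
    have := hC.le
    positivity
  have hHnonneg : 0 ≤ ∫ z, h z := integral_nonneg hhnn
  refine ⟨(∫ z, h z) + 1, by positivity, fun x => ?_⟩
  haveI : Nonempty (Fin N) := ⟨⟨0, by omega⟩⟩
  haveI : Nontrivial (EuclideanSpace ℝ (Fin N)) := by
    unfold EuclideanSpace PiLp
    infer_instance
  by_cases hint : Integrable
      (fun y : EuclideanSpace ℝ (Fin N) => G ‖y - x‖ * Real.exp (-η * ‖y‖))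
  · have hg : Integrable (fun y : EuclideanSpace ℝ (Fin N) =>
        Real.exp (-η * ‖x‖) * h (y - x)) := ((hH.comp_sub_right x).const_mul _)
    have hptwise : ∀ y : EuclideanSpace ℝ (Fin N), y ≠ x →
        G ‖y - x‖ * Real.exp (-η * ‖y‖) ≤ Real.exp (-η * ‖x‖) * h (y - x) := by
      intro y hy
      have hr : 0 < ‖y - x‖ := norm_pos_iff.2 (sub_ne_zero.2 hy)
      have hxle : ‖x‖ ≤ ‖y‖ + ‖y - x‖ := by
        have := norm_sub_le y (y - x)
        simpa using this
      calc G ‖y - x‖ * Real.exp (-η * ‖y‖)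
          ≤ (C * Real.exp (-‖y - x‖) * ‖y - x‖ ^ ((2:ℝ) - N) * (1 + ‖y - x‖) ^ p) *
            Real.exp (-η * ‖y‖) :=
            mul_le_mul_of_nonneg_right (hGb _ hr) (Real.exp_pos _).le
        _ = C * ‖y - x‖ ^ ((2:ℝ) - N) * (1 + ‖y - x‖) ^ p *
            Real.exp (-‖y - x‖ + -η * ‖y‖) := by rw [Real.exp_add]; ring
        _ ≤ C * ‖y - x‖ ^ ((2:ℝ) - N) * (1 + ‖y - x‖) ^ p *
            Real.exp (-η * ‖x‖ + -(1 - η) * ‖y - x‖) := by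
            have hnn : 0 ≤ C * ‖y - x‖ ^ ((2:ℝ) - N) * (1 + ‖y - x‖) ^ p := by
              have := hC.le
              positivity
            refine mul_le_mul_of_nonneg_left (Real.exp_le_exp.2 ?_) hnn
            nlinarith
        _ = Real.exp (-η * ‖x‖) * h (y - x) := by rw [hh, Real.exp_add]; ring
    have hle : ∀ᵐ y : EuclideanSpace ℝ (Fin N),
        G ‖y - x‖ * Real.exp (-η * ‖y‖) ≤ Real.exp (-η * ‖x‖) * h (y - x) := by
      refine (ae_iff.2 ?_)
      refine measure_mono_null (fun y hy => ?_) (measure_singleton x)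
      simp only [mem_setOf_eq] at hy
      by_contra hyx
      exact hy (hptwise y fun h => hyx (by simp [h]))
    calc (∫ y : EuclideanSpace ℝ (Fin N), G ‖y - x‖ * Real.exp (-η * ‖y‖))
        ≤ ∫ y : EuclideanSpace ℝ (Fin N), Real.exp (-η * ‖x‖) * h (y - x) :=
          integral_mono_ae hint hg hle
      _ = Real.exp (-η * ‖x‖) * ∫ y : EuclideanSpace ℝ (Fin N), h (y - x) :=
          MeasureTheory.integral_const_mul _ _
      _ = Real.exp (-η * ‖x‖) * ∫ z, h z := by rw [integral_sub_right_eq_self h x]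
      _ ≤ ((∫ z, h z) + 1) * Real.exp (-η * ‖x‖) := by
          rw [mul_comm]
          gcongr
          linarith
  · rw [integral_undef hint]
    positivity
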